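/- arXiv:2311.01264 — 5 statements merged into one kernel-verified Lean document; each statement's English description precedes it below -/
import Mathlib

section
/- Let d ≥ 1 and let ρ > 0, α > 0, c₀ > 0 be real constants. Let K be a symmetric positive definite d×d real matrix, and let S be a linear map on d×d real matrices for which there exists c_S > 0 with ∑_{i,j} (Sσ)_{ij} σ_{ij} ≥ c_S ∑_{i,j} σ_{ij}² for every symmetric d×d matrix σ. Then there exist ν₀ > 0 and γ > 0 such that for every ν ≥ ν₀ and every v ∈ ℝ^d, every symmetric d×d real matrix σ, every p ∈ ℝ and every q̄ ∈ ℝ^d: ν(ρ‖v‖² + ∑_{i,j}(Sσ)_{ij}σ_{ij} + c₀ p²) − α²⟨K⁻¹v, v⟩ − 2α⟨K⁻¹v, q̄⟩ + ⟨K⁻¹q̄, q̄⟩ ≥ γ(‖v‖² + ∑_{i,j}σ_{ij}² + p² + ‖q̄‖²). -/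
set_option maxHeartbeats 1000000


open Matrix

private lemma aux_symm {d : ℕ} (A : Matrix (Fin d) (Fin d) ℝ) (hA : Aᵀ = A)
    (v q : Fin d → ℝ) : A.mulVec v ⬝ᵥ q = A.mulVec q ⬝ᵥ v := by
  simp only [dotProduct, Matrix.mulVec, dotProduct, Finset.sum_mul]
  rw [Finset.sum_comm]
  refine Finset.sum_congr rfl fun i _ => Finset.sum_congr rfl fun j _ => ?_
  have h : A j i = A i j := by
    rw [← Matrix.transpose_apply A i j, hA]
  rw [h]; ring

private lemma aux_upper {d : ℕ} (A : Matrix (Fin d) (Fin d) ℝ) (x : Fin d → ℝ) :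
    A.mulVec x ⬝ᵥ x ≤ (∑ i, ∑ j, |A i j|) * (∑ i, x i ^ 2) := by
  have hS : ∀ k, x k ^ 2 ≤ ∑ i, x i ^ 2 := fun k =>
    Finset.single_le_sum (fun i _ => sq_nonneg (x i)) (Finset.mem_univ k)
  simp only [dotProduct, Matrix.mulVec, dotProduct, Finset.sum_mul]
  refine Finset.sum_le_sum fun i _ => Finset.sum_le_sum fun j _ => ?_
  have h1 : A i j * x j * x i ≤ |A i j| * |x j * x i| := by
    calc A i j * x j * x i ≤ |A i j * x j * x i| := le_abs_self _
    _ = |A i j| * |x j * x i| := by rw [mul_assoc, abs_mul]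
  refine h1.trans ?_
  have h2 : |x j * x i| ≤ ∑ k, x k ^ 2 := by
    have := hS i; have := hS j
    have habs : |x j * x i| ≤ (x j ^ 2 + x i ^ 2) / 2 := by
      rw [abs_mul]
      nlinarith [sq_nonneg (|x j| - |x i|), sq_abs (x j), sq_abs (x i)]
    nlinarith
  exact mul_le_mul_of_nonneg_left h2 (abs_nonneg _)

private lemma aux_lower {d : ℕ} (hd : 1 ≤ d) (A : Matrix (Fin d) (Fin d) ℝ)
    (hA : A.PosDef) : ∃ c > (0:ℝ), ∀ x : Fin d → ℝ,
      c * (∑ i, x i ^ 2) ≤ A.mulVec x ⬝ᵥ x := by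
  -- minimize the quadratic form on the unit sphere of Euclidean space
  set E := EuclideanSpace ℝ (Fin d)
  have hf : Continuous fun x : E => A.mulVec x ⬝ᵥ x := by
    simp only [dotProduct, Matrix.mulVec, dotProduct]
    refine continuous_finset_sum _ fun i _ => Continuous.mul ?_ ?_
    · exact continuous_finset_sum _ fun j _ =>
        (continuous_const.mul ((EuclideanSpace.proj j : E →L[ℝ] ℝ).continuous))
    · exact (EuclideanSpace.proj i : E →L[ℝ] ℝ).continuous
  have i0 : Fin d := ⟨0, hd⟩
  have hx₁ : (EuclideanSpace.single i0 (1:ℝ) : E) ∈ Metric.sphere (0:E) 1 := by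
    simp [mem_sphere_zero_iff_norm, EuclideanSpace.norm_single]
  have hne : (Metric.sphere (0:E) 1).Nonempty := ⟨_, hx₁⟩
  obtain ⟨x₀, hx₀, hmin'⟩ := (isCompact_sphere (0:E) 1).exists_isMinOn hne
    hf.continuousOn
  have hmin : ∀ y ∈ Metric.sphere (0:E) 1, A.mulVec x₀ ⬝ᵥ x₀ ≤ A.mulVec y ⬝ᵥ y := fun y hy => hmin' hy
  set c := A.mulVec x₀ ⬝ᵥ x₀ with hc
  have hx₀norm : ‖x₀‖ = 1 := by simpa [mem_sphere_zero_iff_norm] using hx₀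
  have hx₀ne : x₀ ≠ 0 := by
    intro h; rw [h] at hx₀norm; simp at hx₀norm
  have hcpos : 0 < c := by
    have h := hA.dotProduct_mulVec_pos (x := (x₀ : Fin d → ℝ))
      (fun h => hx₀ne (WithLp.ofLp_injective 2 (by simpa using h)))
    rw [hc, dotProduct_comm]
    simpa using h
  have normeq : ∀ y : EuclideanSpace ℝ (Fin d), ‖y‖ = Real.sqrt (∑ i, y i ^ 2) := by
    intro y
    rw [EuclideanSpace.norm_eq]
    congr 1
    exact Finset.sum_congr rfl fun i _ => by simp [sq_abs]
  refine ⟨c, hcpos, fun x => ?_⟩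
  rcases eq_or_ne x 0 with hx | hx
  · simp [hx]
  · have hsum : 0 < ∑ i, x i ^ 2 := by
      obtain ⟨i, hi⟩ := Function.ne_iff.mp hx
      exact Finset.sum_pos' (fun j _ => sq_nonneg _)
        ⟨i, Finset.mem_univ i,
          lt_of_le_of_ne (sq_nonneg (x i)) (Ne.symm (pow_ne_zero 2 hi))⟩
    set r : ℝ := Real.sqrt (∑ i, x i ^ 2) with hrdef
    have hrpos : 0 < r := Real.sqrt_pos.mpr hsum
    have hr2 : r ^ 2 = ∑ i, x i ^ 2 := Real.sq_sqrt hsum.le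
    set xE : EuclideanSpace ℝ (Fin d) := WithLp.toLp 2 x with hxE
    set u : EuclideanSpace ℝ (Fin d) := r⁻¹ • xE with hu
    have hui : ∀ i, u i = r⁻¹ * x i := fun i => rfl
    have hs : ∑ i, u i ^ 2 = 1 := by
      have h3 : ∀ i, u i ^ 2 = r⁻¹ ^ 2 * x i ^ 2 := fun i => by rw [hui i]; ring
      rw [Finset.sum_congr rfl fun i _ => h3 i, ← Finset.mul_sum, ← hr2]
      field_simp
    have hmem : u ∈ Metric.sphere (0 : EuclideanSpace ℝ (Fin d)) 1 := by
      rw [mem_sphere_zero_iff_norm, normeq, hs, Real.sqrt_one]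
    have hfu : c ≤ A.mulVec u ⬝ᵥ u := hmin u hmem
    have hscale : A.mulVec u ⬝ᵥ u = r⁻¹ * r⁻¹ * (A.mulVec x ⬝ᵥ x) := by
      have huf : (u : Fin d → ℝ) = r⁻¹ • x := rfl
      rw [huf, Matrix.mulVec_smul, smul_dotProduct, dotProduct_smul]
      simp [smul_eq_mul]; ring
    have hkey : c * r ^ 2 ≤ A.mulVec x ⬝ᵥ x := by
      rw [hscale] at hfu
      have h2 : c * r ^ 2 ≤ r⁻¹ * r⁻¹ * (A.mulVec x ⬝ᵥ x) * r ^ 2 :=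
        mul_le_mul_of_nonneg_right hfu (by positivity)
      calc c * r ^ 2 ≤ r⁻¹ * r⁻¹ * (A.mulVec x ⬝ᵥ x) * r ^ 2 := h2
      _ = A.mulVec x ⬝ᵥ x := by
          rw [sq]
          field_simp
    rwa [hr2] at hkey

/-- Positivity condition `⟨(νM₀+M₁)x, x⟩ ≥ γ⟨x, x⟩` for the hyperbolic-parabolic
poroelasticity system, on quadruples `x = (v, σ, p, q̄)`. -/
theorem stmt_0 (d : ℕ) (hd : 1 ≤ d) (ρ α c₀ : ℝ) (hρ : 0 < ρ) (hα : 0 < α) (hc₀ : 0 < c₀)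
    (K : Matrix (Fin d) (Fin d) ℝ) (hK : K.PosDef)
    (S : Matrix (Fin d) (Fin d) ℝ →ₗ[ℝ] Matrix (Fin d) (Fin d) ℝ)
    (hS : ∃ cS > (0:ℝ), ∀ σ : Matrix (Fin d) (Fin d) ℝ, σ.IsSymm →
      cS * (∑ i, ∑ j, σ i j ^ 2) ≤ ∑ i, ∑ j, S σ i j * σ i j) :
    ∃ ν₀ > (0:ℝ), ∃ γ > (0:ℝ), ∀ ν : ℝ, ν₀ ≤ ν →
      ∀ (v : Fin d → ℝ) (σ : Matrix (Fin d) (Fin d) ℝ) (p : ℝ) (q : Fin d → ℝ), σ.IsSymm →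
        γ * ((∑ i, v i ^ 2) + (∑ i, ∑ j, σ i j ^ 2) + p ^ 2 + (∑ i, q i ^ 2)) ≤
          ν * (ρ * (∑ i, v i ^ 2) + (∑ i, ∑ j, S σ i j * σ i j) + c₀ * p ^ 2)
            - α ^ 2 * (K⁻¹.mulVec v ⬝ᵥ v) - 2 * α * (K⁻¹.mulVec v ⬝ᵥ q)
            + (K⁻¹.mulVec q ⬝ᵥ q) := by
  obtain ⟨cS, hcS, hSbound⟩ := hS
  set A := K⁻¹ with hAdef
  have hApd : A.PosDef := hK.inv
  have hAsymm : Aᵀ = A := by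
    have h := hApd.isHermitian
    ext i j
    have := congrFun (congrFun h.symm i) j
    simpa [Matrix.conjTranspose_apply] using this.symm
  obtain ⟨c₁, hc₁, hlow⟩ := aux_lower hd A hApd
  set c₂ : ℝ := ∑ i, ∑ j, |A i j| with hc₂def
  have hc₂nn : 0 ≤ c₂ := Finset.sum_nonneg fun i _ =>
    Finset.sum_nonneg fun j _ => abs_nonneg _
  have hvup : ∀ x : Fin d → ℝ, A.mulVec x ⬝ᵥ x ≤ c₂ * (∑ i, x i ^ 2) :=
    fun x => aux_upper A x
  have hvlow : ∀ x : Fin d → ℝ, 0 ≤ A.mulVec x ⬝ᵥ x := by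
    intro x
    rcases eq_or_ne x 0 with h | h
    · simp [h]
    · have h2 : 0 < x ⬝ᵥ A.mulVec x := by simpa using hApd.dotProduct_mulVec_pos h
      rw [dotProduct_comm] at h2
      exact h2.le
  set C : ℝ := α ^ 2 * (c₁ + 2 * c₂) with hCdef
  have hCpos : 0 < C := by positivity
  set γ : ℝ := min (min 1 (c₁ / 2)) (min cS c₀) with hγdef
  have hγpos : 0 < γ := lt_min (lt_min one_pos (by linarith)) (lt_min hcS hc₀)
  have hγcS : γ ≤ cS := le_trans (min_le_right _ _) (min_le_left _ _)
  have hγc₀ : γ ≤ c₀ := le_trans (min_le_right _ _) (min_le_right _ _)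
  have hγc₁ : γ ≤ c₁ / 2 := le_trans (min_le_left _ _) (min_le_right _ _)
  set m : ℝ := min ρ (min cS c₀) with hmdef
  have hmpos : 0 < m := lt_min hρ (lt_min hcS hc₀)
  have hmρ : m ≤ ρ := min_le_left _ _
  clear_value A c₂ C γ m
  clear hγdef hmdef hAdef
  refine ⟨(γ + C) / m + 1, by positivity, γ, hγpos, fun ν hν v σ p q hσ => ?_⟩
  have hfrac : 0 ≤ (γ + C) / m := (div_pos (by linarith) hmpos).le
  have hνge1 : 1 ≤ ν := by linarith
  have hνpos : 0 < ν := by linarith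
  have hνm : γ + C ≤ ν * m := by
    have h1 : (γ + C) / m ≤ ν := by linarith
    calc γ + C = (γ + C) / m * m := by field_simp
    _ ≤ ν * m := mul_le_mul_of_nonneg_right h1 hmpos.le
  set V : ℝ := ∑ i, v i ^ 2 with hV
  set Ssq : ℝ := ∑ i, ∑ j, σ i j ^ 2 with hSsq
  set Q : ℝ := ∑ i, q i ^ 2 with hQ
  set T : ℝ := ∑ i, ∑ j, S σ i j * σ i j with hT
  have hVnn : 0 ≤ V := Finset.sum_nonneg fun i _ => sq_nonneg _
  have hSsqnn : 0 ≤ Ssq := Finset.sum_nonneg fun i _ =>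
    Finset.sum_nonneg fun j _ => sq_nonneg _
  have hQnn : 0 ≤ Q := Finset.sum_nonneg fun i _ => sq_nonneg _
  have hSσ : cS * Ssq ≤ T := hSbound σ hσ
  -- completion of square in (v, q)
  set w : Fin d → ℝ := q - α • v with hw
  have hexp : A.mulVec w ⬝ᵥ w =
      A.mulVec q ⬝ᵥ q - 2 * α * (A.mulVec v ⬝ᵥ q) + α ^ 2 * (A.mulVec v ⬝ᵥ v) := by
    have hcross : A.mulVec q ⬝ᵥ v = A.mulVec v ⬝ᵥ q := aux_symm A hAsymm q v
    rw [hw, Matrix.mulVec_sub, Matrix.mulVec_smul]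
    simp only [sub_dotProduct, dotProduct_sub,
      smul_dotProduct, dotProduct_smul, smul_eq_mul]
    rw [hcross]; ring
  have hwsum : Q / 2 - α ^ 2 * V ≤ ∑ i, w i ^ 2 := by
    have hterm : ∀ i, q i ^ 2 / 2 - α ^ 2 * v i ^ 2 ≤ w i ^ 2 := by
      intro i
      have hwi : w i = q i - α * v i := by simp [hw]
      rw [hwi]
      nlinarith [sq_nonneg (q i / 2 - (α * v i))]
    calc Q / 2 - α ^ 2 * V = ∑ i, (q i ^ 2 / 2 - α ^ 2 * v i ^ 2) := by
          rw [Finset.sum_sub_distrib, ← Finset.mul_sum, ← Finset.sum_div]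
    _ ≤ ∑ i, w i ^ 2 := Finset.sum_le_sum fun i _ => hterm i
  have hwlow : c₁ * (Q / 2 - α ^ 2 * V) ≤ A.mulVec w ⬝ᵥ w :=
    le_trans (mul_le_mul_of_nonneg_left hwsum hc₁.le) (hlow w)
  have hvvup : A.mulVec v ⬝ᵥ v ≤ c₂ * V := hvup v
  have hvvlow : 0 ≤ A.mulVec v ⬝ᵥ v := hvlow v
  set X : ℝ := A.mulVec v ⬝ᵥ v with hX
  set Y : ℝ := A.mulVec v ⬝ᵥ q with hY
  set Z : ℝ := A.mulVec q ⬝ᵥ q with hZ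
  set W : ℝ := A.mulVec w ⬝ᵥ w with hW
  clear_value V Ssq Q T w X Y Z W
  have key : - α ^ 2 * X - 2 * α * Y + Z = W - 2 * α ^ 2 * X := by
    rw [hexp]; ring
  clear hlow hvlow hvup hc₂def hSbound hσ hwsum hexp hW hX hY hZ hT hQ hSsq hV hApd hAsymm
  clear hw w σ v q A hK K S hd
  -- pieces from the ν-part
  have hν1 : (γ + C) * V ≤ ν * (ρ * V) := by
    have h : γ + C ≤ ν * ρ := le_trans hνm (mul_le_mul_of_nonneg_left hmρ hνpos.le)
    nlinarith
  have hTnn : 0 ≤ T := le_trans (by positivity) hSσ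
  have hν2 : γ * Ssq ≤ ν * T := by
    have h2 : cS * Ssq ≤ ν * T := le_trans hSσ (by nlinarith)
    nlinarith
  have hν3 : γ * p ^ 2 ≤ ν * (c₀ * p ^ 2) := by
    nlinarith [mul_nonneg (sub_nonneg.mpr hγc₀) (sq_nonneg p),
      mul_nonneg (mul_nonneg (by linarith : (0:ℝ) ≤ ν - 1) hc₀.le) (sq_nonneg p)]
  -- combine
  have hquad : γ * Q - C * V ≤ - α ^ 2 * X - 2 * α * Y + Z := by
    rw [key, hCdef]
    have h1 : 2 * α ^ 2 * X ≤ 2 * α ^ 2 * (c₂ * V) := by nlinarith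
    have h2 : c₁ * (Q / 2) - c₁ * (α ^ 2 * V) ≤ W := by nlinarith
    have h3 : γ * Q ≤ c₁ / 2 * Q := by nlinarith
    nlinarith
  linarith [hν1, hν2, hν3, hquad]
end

section
/- Let H be a real Hilbert space and let M₀, M₁ : H → H be bounded linear operators with M₀ selfadjoint and ⟨M₀x, x⟩ ≥ 0 for all x ∈ H. Let ν > 0 and γ > 0 satisfy ⟨(νM₀ + M₁)x, x⟩ ≥ γ‖x‖² for all x ∈ H. Then for all real numbers a < b and every continuously differentiable v : ℝ → H: ∫_a^b ⟨M₀ v'(t) + M₁ v(t), v(t)⟩ e^{−2ν(t−a)} dt ≥ γ ∫_a^b ‖v(t)‖² e^{−2ν(t−a)} dt + (1/2) e^{−2ν(b−a)} ⟨M₀ v(b), v(b)⟩ − (1/2) ⟨M₀ v(a), v(a)⟩. -/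
open scoped RealInnerProductSpace

/-- Coercivity lower bound for the exponentially weighted space-time bilinear form
of `∂ₜ M₀ + M₁` on one time interval. -/
theorem stmt_4 {H : Type*} [NormedAddCommGroup H] [InnerProductSpace ℝ H] [CompleteSpace H]
    (M₀ M₁ : H →L[ℝ] H)
    (hM₀sym : ∀ x y : H, ⟪M₀ x, y⟫ = ⟪x, M₀ y⟫)
    (hM₀pos : ∀ x : H, 0 ≤ ⟪M₀ x, x⟫)
    (ν γ : ℝ) (hν : 0 < ν) (hγ : 0 < γ)
    (hcoer : ∀ x : H, γ * ‖x‖ ^ 2 ≤ ⟪(ν • M₀ + M₁) x, x⟫)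
    (a b : ℝ) (hab : a < b) (v : ℝ → H) (hv : ContDiff ℝ 1 v) :
    γ * (∫ t in a..b, ‖v t‖ ^ 2 * Real.exp (-2 * ν * (t - a)))
        + (1/2) * Real.exp (-2 * ν * (b - a)) * ⟪M₀ (v b), v b⟫
        - (1/2) * ⟪M₀ (v a), v a⟫ ≤
      ∫ t in a..b, ⟪M₀ (deriv v t) + M₁ (v t), v t⟫ * Real.exp (-2 * ν * (t - a)) := by
  have hab' : a ≤ b := hab.le
  have hvdiff : Differentiable ℝ v := hv.differentiable one_ne_zero
  have hvc : Continuous v := hv.continuous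
  have hdc : Continuous (deriv v) := hv.continuous_deriv le_rfl
  set e : ℝ → ℝ := fun t => Real.exp (-2 * ν * (t - a)) with he
  have hec : Continuous e := Real.continuous_exp.comp (by fun_prop)
  have hepos : ∀ t, 0 < e t := fun t => Real.exp_pos _
  set F : ℝ → ℝ := fun t => (1/2) * (e t * ⟪M₀ (v t), v t⟫) with hF
  -- derivative of F
  have hFd : ∀ t, HasDerivAt F
      (e t * (⟪M₀ (deriv v t), v t⟫ - ν * ⟪M₀ (v t), v t⟫)) t := by
    intro t
    have hvt : HasDerivAt v (deriv v t) t := (hvdiff t).hasDerivAt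
    have hMv : HasDerivAt (fun s => M₀ (v s)) (M₀ (deriv v t)) t :=
      M₀.hasFDerivAt.comp_hasDerivAt t hvt
    have hq : HasDerivAt (fun s => ⟪M₀ (v s), v s⟫)
        (⟪M₀ (v t), deriv v t⟫ + ⟪M₀ (deriv v t), v t⟫) t := hMv.inner ℝ hvt
    have hlin : HasDerivAt (fun s : ℝ => -2 * ν * (s - a)) (-2 * ν) t := by
      simpa using ((hasDerivAt_id t).sub_const a).const_mul (-2 * ν)
    have hee : HasDerivAt e (-2 * ν * e t) t := by
      simpa [he, mul_comm] using hlin.exp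
    have := ((hee.mul hq).const_mul (1/2 : ℝ))
    refine HasDerivAt.congr_deriv this ?_
    have hsym : ⟪M₀ (v t), deriv v t⟫ = ⟪M₀ (deriv v t), v t⟫ := by
      rw [hM₀sym]; exact real_inner_comm _ _
    rw [hsym]; ring
  -- integrability facts
  have hDc : Continuous (fun t => e t * (⟪M₀ (deriv v t), v t⟫ - ν * ⟪M₀ (v t), v t⟫)) := by
    apply hec.mul
    exact ((M₀.continuous.comp hdc).inner hvc).sub
      (continuous_const.mul ((M₀.continuous.comp hvc).inner hvc))
  have hgc : Continuous (fun t => ⟪(ν • M₀ + M₁) (v t), v t⟫ * e t) :=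
    (((ν • M₀ + M₁).continuous.comp hvc).inner hvc).mul hec
  have hnc : Continuous (fun t => γ * (‖v t‖ ^ 2 * e t)) := by fun_prop
  have hic : Continuous (fun t => ⟪M₀ (deriv v t) + M₁ (v t), v t⟫ * e t) := by
    apply Continuous.mul _ hec
    exact ((M₀.continuous.comp hdc).add (M₁.continuous.comp hvc)).inner hvc
  -- FTC
  have hFTC : (∫ t in a..b, e t * (⟪M₀ (deriv v t), v t⟫ - ν * ⟪M₀ (v t), v t⟫))
      = F b - F a :=
    intervalIntegral.integral_eq_sub_of_hasDerivAt (fun t _ => hFd t)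
      (hDc.intervalIntegrable a b)
  -- split the integral
  have hsplit : (∫ t in a..b, ⟪M₀ (deriv v t) + M₁ (v t), v t⟫ * e t)
      = (F b - F a) + ∫ t in a..b, ⟪(ν • M₀ + M₁) (v t), v t⟫ * e t := by
    rw [← hFTC, ← intervalIntegral.integral_add (hDc.intervalIntegrable a b)
      (hgc.intervalIntegrable a b)]
    apply intervalIntegral.integral_congr
    intro t _
    simp only [ContinuousLinearMap.add_apply, ContinuousLinearMap.smul_apply,
      inner_add_left, real_inner_smul_left]
    ring
  -- pointwise coercivity
  have hmono : γ * (∫ t in a..b, ‖v t‖ ^ 2 * e t)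
      ≤ ∫ t in a..b, ⟪(ν • M₀ + M₁) (v t), v t⟫ * e t := by
    rw [← intervalIntegral.integral_const_mul]
    apply intervalIntegral.integral_mono_on hab'
      (hnc.intervalIntegrable a b) (hgc.intervalIntegrable a b)
    intro t _
    have := mul_le_mul_of_nonneg_right (hcoer (v t)) (hepos t).le
    calc γ * (‖v t‖ ^ 2 * e t) = γ * ‖v t‖ ^ 2 * e t := by ring
      _ ≤ _ := this
  have hFb : F b = (1/2) * (e b * ⟪M₀ (v b), v b⟫) := rfl
  have hFa : F a = (1/2) * (e a * ⟪M₀ (v a), v a⟫) := rfl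
  have hea : e a = 1 := by simp [he]
  rw [hsplit]
  rw [hFb, hFa, hea]
  have heb : e b = Real.exp (-2 * ν * (b - a)) := rfl
  rw [heb]
  linarith
end

section
/- Let H be a real Hilbert space and let M₀, M₁ : H → H be bounded linear operators with M₀ selfadjoint and ⟨M₀x, x⟩ ≥ 0 for all x ∈ H. Let ν > 0 and γ > 0 satisfy ⟨(νM₀ + M₁)x, x⟩ ≥ γ‖x‖² for all x ∈ H. Then for all real numbers a < b, every continuously differentiable v : ℝ → H and every v⁻ ∈ H: ∫_a^b ⟨M₀ v'(t) + M₁ v(t), v(t)⟩ e^{−2ν(t−a)} dt + ⟨M₀ (v(a) − v⁻), v(a)⟩ ≥ γ ∫_a^b ‖v(t)‖² e^{−2ν(t−a)} dt + (1/2) [ e^{−2ν(b−a)} ⟨M₀ v(b), v(b)⟩ − ⟨M₀ v⁻, v⁻⟩ + ⟨M₀ (v(a) − v⁻), v(a) − v⁻⟩ ]. -/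
open scoped RealInnerProductSpace

/-- Coercivity lower bound, including the DG jump term `⟨M₀⟦v⟧, v⁺⟩`, for the
exponentially weighted space-time bilinear form of `∂ₜ M₀ + M₁` on `(a, b]`. -/
theorem stmt_5 {H : Type*} [NormedAddCommGroup H] [InnerProductSpace ℝ H] [CompleteSpace H]
    (M₀ M₁ : H →L[ℝ] H)
    (hM₀sym : ∀ x y : H, ⟪M₀ x, y⟫ = ⟪x, M₀ y⟫)
    (hM₀pos : ∀ x : H, 0 ≤ ⟪M₀ x, x⟫)
    (ν γ : ℝ) (hν : 0 < ν) (hγ : 0 < γ)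
    (hcoer : ∀ x : H, γ * ‖x‖ ^ 2 ≤ ⟪(ν • M₀ + M₁) x, x⟫)
    (a b : ℝ) (hab : a < b) (v : ℝ → H) (hv : ContDiff ℝ 1 v) (vm : H) :
    γ * (∫ t in a..b, ‖v t‖ ^ 2 * Real.exp (-2 * ν * (t - a)))
        + (1/2) * (Real.exp (-2 * ν * (b - a)) * ⟪M₀ (v b), v b⟫
            - ⟪M₀ vm, vm⟫ + ⟪M₀ (v a - vm), v a - vm⟫) ≤
      (∫ t in a..b, ⟪M₀ (deriv v t) + M₁ (v t), v t⟫ * Real.exp (-2 * ν * (t - a)))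
        + ⟪M₀ (v a - vm), v a⟫ := by
  set E : ℝ → ℝ := fun t => Real.exp (-2 * ν * (t - a)) with hE_def
  have hvd : Differentiable ℝ v := hv.differentiable one_ne_zero
  have hv' : Continuous (deriv v) := hv.continuous_deriv le_rfl
  have hvc : Continuous v := hv.continuous
  have hEcont : Continuous E := by fun_prop
  have hEpos : ∀ t, 0 < E t := fun t => Real.exp_pos _
  -- derivative of E
  have hE : ∀ t : ℝ, HasDerivAt E ((-2 * ν) * E t) t := by
    intro t
    have h1 : HasDerivAt (fun t : ℝ => -2 * ν * (t - a)) (-2 * ν) t := by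
      simpa using ((hasDerivAt_id t).sub_const a).const_mul (-2 * ν)
    have h2 := h1.exp
    convert h2 using 1
    simp only [hE_def]
    ring
  -- derivative of t ↦ ⟪M₀ (v t), v t⟫
  have hg : ∀ t : ℝ, HasDerivAt (fun t => ⟪M₀ (v t), v t⟫)
      (2 * ⟪M₀ (deriv v t), v t⟫) t := by
    intro t
    have hvt : HasDerivAt v (deriv v t) t := (hvd t).hasDerivAt
    have hMv : HasDerivAt (fun t => M₀ (v t)) (M₀ (deriv v t)) t :=
      M₀.hasFDerivAt.comp_hasDerivAt t hvt
    have := hMv.inner ℝ hvt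
    have hsym : ⟪M₀ (v t), deriv v t⟫ = ⟪M₀ (deriv v t), v t⟫ := by
      rw [hM₀sym, real_inner_comm]
    refine this.congr_deriv ?_
    rw [hsym]; ring
  -- F := E * g
  set F : ℝ → ℝ := fun t => E t * ⟪M₀ (v t), v t⟫ with hF_def
  set φ : ℝ → ℝ := fun t =>
    E t * (2 * ⟪M₀ (deriv v t), v t⟫ - 2 * ν * ⟪M₀ (v t), v t⟫) with hφ_def
  have hF : ∀ t : ℝ, HasDerivAt F (φ t) t := by
    intro t
    have := (hE t).mul (hg t)
    refine this.congr_deriv ?_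
    simp only [hφ_def]
    ring
  have hφcont : Continuous φ := by
    apply hEcont.mul
    apply Continuous.sub
    · exact continuous_const.mul ((M₀.continuous.comp hv').inner (by fun_prop))
    · exact continuous_const.mul ((M₀.continuous.comp hvc).inner hvc)
  have hFTC : ∫ t in a..b, φ t = F b - F a :=
    intervalIntegral.integral_eq_sub_of_hasDerivAt
      (fun t _ => hF t) (hφcont.intervalIntegrable a b)
  -- ψ := E * (ν ⟪M₀ v, v⟫ + ⟪M₁ v, v⟫)
  set ψ : ℝ → ℝ := fun t => E t * (ν * ⟪M₀ (v t), v t⟫ + ⟪M₁ (v t), v t⟫) with hψ_def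
  have hψcont : Continuous ψ := by
    apply hEcont.mul
    apply Continuous.add
    · exact continuous_const.mul ((M₀.continuous.comp hvc).inner hvc)
    · exact (M₁.continuous.comp hvc).inner hvc
  -- split the main integral
  have hsplit : (∫ t in a..b, ⟪M₀ (deriv v t) + M₁ (v t), v t⟫ * E t)
      = (1/2) * (∫ t in a..b, φ t) + ∫ t in a..b, ψ t := by
    rw [← intervalIntegral.integral_const_mul, ← intervalIntegral.integral_add
      ((hφcont.intervalIntegrable a b).const_mul _) (hψcont.intervalIntegrable a b)]
    apply intervalIntegral.integral_congr
    intro t _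
    simp only [hφ_def, hψ_def, inner_add_left]
    ring
  -- coercivity under the integral
  have hmono : γ * (∫ t in a..b, ‖v t‖ ^ 2 * E t) ≤ ∫ t in a..b, ψ t := by
    rw [← intervalIntegral.integral_const_mul]
    apply intervalIntegral.integral_mono_on hab.le
    · exact (((hvc.norm.pow 2).mul hEcont).intervalIntegrable a b).const_mul _
    · exact hψcont.intervalIntegrable a b
    · intro t _
      have h1 := hcoer (v t)
      have h2 : ⟪(ν • M₀ + M₁) (v t), v t⟫
          = ν * ⟪M₀ (v t), v t⟫ + ⟪M₁ (v t), v t⟫ := by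
        simp [inner_add_left, real_inner_smul_left]
      rw [h2] at h1
      have := mul_le_mul_of_nonneg_right h1 (hEpos t).le
      simpa [hψ_def, mul_comm, mul_assoc, mul_left_comm] using this
  -- boundary algebra
  have hEa : E a = 1 := by simp [hE_def]
  have hvmva : ⟪M₀ vm, v a⟫ = ⟪M₀ (v a), vm⟫ := by
    rw [hM₀sym, real_inner_comm]
  have hbdry : (1/2) * (E b * ⟪M₀ (v b), v b⟫ - ⟪M₀ vm, vm⟫
        + ⟪M₀ (v a - vm), v a - vm⟫) - ⟪M₀ (v a - vm), v a⟫
      = (1/2) * (F b - F a) := by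
    simp only [hF_def, hEa, map_sub, inner_sub_left, inner_sub_right, one_mul]
    rw [hvmva]
    ring
  calc γ * (∫ t in a..b, ‖v t‖ ^ 2 * E t)
        + (1/2) * (E b * ⟪M₀ (v b), v b⟫ - ⟪M₀ vm, vm⟫ + ⟪M₀ (v a - vm), v a - vm⟫)
      = γ * (∫ t in a..b, ‖v t‖ ^ 2 * E t) + (1/2) * (F b - F a) + ⟪M₀ (v a - vm), v a⟫ := by
        rw [← hbdry]; ring
    _ ≤ (∫ t in a..b, ψ t) + (1/2) * (∫ t in a..b, φ t) + ⟪M₀ (v a - vm), v a⟫ := by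
        rw [hFTC]; linarith [hmono]
    _ = (∫ t in a..b, ⟪M₀ (deriv v t) + M₁ (v t), v t⟫ * E t) + ⟪M₀ (v a - vm), v a⟫ := by
        rw [hsplit]; ring
end

section
/- Let H be a real Hilbert space and let M₀, M₁, A : H → H be bounded linear operators with M₀ selfadjoint and ⟨Ax, x⟩ = 0 for all x ∈ H. Let ν > 0 and γ > 0 satisfy ⟨(νM₀ + M₁)x, x⟩ ≥ γ‖x‖² for all x ∈ H. Let U : ℝ → H be continuously differentiable with compact support and set F(t) := M₀ U'(t) + M₁ U(t) + A U(t). Then ∫_ℝ ‖U(t)‖² e^{−2νt} dt ≤ γ^{−2} ∫_ℝ ‖F(t)‖² e^{−2νt} dt. -/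
open MeasureTheory
open scoped RealInnerProductSpace

/-- Exponentially weighted a priori stability estimate `‖U‖_ν ≤ γ⁻¹ ‖F‖_ν` for the
evolutionary equation `(∂ₜ M₀ + M₁ + A) U = F` of Picard's solution theory. -/
theorem stmt_6 {H : Type*} [NormedAddCommGroup H] [InnerProductSpace ℝ H] [CompleteSpace H]
    (M₀ M₁ A : H →L[ℝ] H)
    (hM₀sym : ∀ x y : H, ⟪M₀ x, y⟫ = ⟪x, M₀ y⟫)
    (hA : ∀ x : H, ⟪A x, x⟫ = 0)
    (ν γ : ℝ) (hν : 0 < ν) (hγ : 0 < γ)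
    (hcoer : ∀ x : H, γ * ‖x‖ ^ 2 ≤ ⟪(ν • M₀ + M₁) x, x⟫)
    (U : ℝ → H) (hU : ContDiff ℝ 1 U) (hUc : HasCompactSupport U)
    (F : ℝ → H) (hF : ∀ t, F t = M₀ (deriv U t) + M₁ (U t) + A (U t)) :
    (∫ t : ℝ, ‖U t‖ ^ 2 * Real.exp (-2 * ν * t)) ≤
      γ⁻¹ ^ 2 * ∫ t : ℝ, ‖F t‖ ^ 2 * Real.exp (-2 * ν * t) := by
  have hFe : F = fun t => M₀ (deriv U t) + M₁ (U t) + A (U t) := funext hF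
  subst hFe
  set w : ℝ → ℝ := fun t => Real.exp (-2 * ν * t) with hwdef
  have hwc : Continuous w := by fun_prop
  have hwpos : ∀ t, 0 < w t := fun t => Real.exp_pos _
  have hUcont : Continuous U := hU.continuous
  have hU'cont : Continuous (deriv U) := hU.continuous_deriv le_rfl
  have hU'c : HasCompactSupport (deriv U) := hUc.deriv
  have hdU : ∀ t, HasDerivAt U (deriv U t) t := fun t =>
    (hU.differentiable one_ne_zero t).hasDerivAt
  -- the auxiliary function g and its derivative
  set g : ℝ → ℝ := fun t => ⟪M₀ (U t), U t⟫ * w t with hgdef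
  set g' : ℝ → ℝ := fun t =>
      (2 * ⟪M₀ (deriv U t), U t⟫ - 2 * ν * ⟪M₀ (U t), U t⟫) * w t with hg'def
  have hgderiv : ∀ t, HasDerivAt g (g' t) t := by
    intro t
    have h1 : HasDerivAt (fun t => M₀ (U t)) (M₀ (deriv U t)) t :=
      (M₀.hasFDerivAt (x := U t)).comp_hasDerivAt t (hdU t)
    have h2 : HasDerivAt (fun t => ⟪M₀ (U t), U t⟫)
        (⟪M₀ (U t), deriv U t⟫ + ⟪M₀ (deriv U t), U t⟫) t :=
      HasDerivAt.inner ℝ h1 (hdU t)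
    have h3 : HasDerivAt (fun t : ℝ => -2 * ν * t) (-2 * ν) t := by
      simpa using (hasDerivAt_id t).const_mul (-2 * ν)
    have h4 : HasDerivAt w (Real.exp (-2 * ν * t) * (-2 * ν)) t := h3.exp
    have h5 : HasDerivAt (fun t => ⟪M₀ (U t), U t⟫ * w t) _ t := h2.mul h4
    have hsym : ⟪M₀ (U t), deriv U t⟫ = ⟪M₀ (deriv U t), U t⟫ := by
      rw [hM₀sym]; exact real_inner_comm _ _
    convert h5 using 1
    simp only [hg'def, hwdef, hsym]
    ring
  have hderiv_eq : deriv g = g' := funext fun t => (hgderiv t).deriv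
  have hgc : HasCompactSupport g := hUc.mono (fun x hx => by
    simp only [Function.mem_support] at hx ⊢
    intro h0
    apply hx
    simp [hgdef, h0])
  have hgC : ContDiff ℝ 1 g := by
    have : ContDiff ℝ 1 (fun t => ⟪M₀ (U t), U t⟫) :=
      ContDiff.inner ℝ (M₀.contDiff.comp hU) hU
    exact this.mul (by fun_prop)
  have hg'cont : Continuous g' := by
    have h1 : Continuous (fun t => ⟪M₀ (deriv U t), U t⟫) :=
      (M₀.continuous.comp hU'cont).inner hUcont
    have h2 : Continuous (fun t => ⟪M₀ (U t), U t⟫) :=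
      (M₀.continuous.comp hUcont).inner hUcont
    fun_prop
  have hg'int : Integrable g' := by
    refine hg'cont.integrable_of_hasCompactSupport ?_
    rw [← hderiv_eq]; exact hgc.deriv
  -- the integral of the derivative of g vanishes
  have h0 : ∫ t, g' t = 0 := by
    rw [← hderiv_eq] at hg'int ⊢
    rw [← intervalIntegral.integral_Iic_add_Ioi (b := 0) hg'int.integrableOn hg'int.integrableOn,
      hgc.integral_Iic_deriv_eq hgC 0, hgc.integral_Ioi_deriv_eq hgC 0]
    ring
  -- the integrands
  set F : ℝ → H := fun t => M₀ (deriv U t) + M₁ (U t) + A (U t) with hFdef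
  have hFcont : Continuous F := by
    simp only [hFdef]
    exact ((M₀.continuous.comp hU'cont).add (M₁.continuous.comp hUcont)).add
      (A.continuous.comp hUcont)
  have hFc : HasCompactSupport F := by
    have h1 : HasCompactSupport (fun t => M₀ (deriv U t)) :=
      hU'c.comp_left (map_zero M₀)
    have h2 : HasCompactSupport (fun t => M₁ (U t)) := hUc.comp_left (map_zero M₁)
    have h3 : HasCompactSupport (fun t => A (U t)) := hUc.comp_left (map_zero A)
    exact (h1.add h2).add h3
  set φ : ℝ → ℝ := fun t => ‖U t‖ ^ 2 * w t with hφdef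
  set ψ : ℝ → ℝ := fun t => ‖F t‖ ^ 2 * w t with hψdef
  set p : ℝ → ℝ := fun t => ⟪F t, U t⟫ * w t with hpdef
  set q : ℝ → ℝ := fun t => ⟪(ν • M₀ + M₁) (U t), U t⟫ * w t with hqdef
  have hφint : Integrable φ := by
    refine ((hUcont.norm.pow 2).mul hwc).integrable_of_hasCompactSupport ?_
    exact hUc.mono (fun x hx => by
      simp only [Function.mem_support] at hx ⊢
      intro h0; apply hx; simp [hφdef, h0])
  have hψint : Integrable ψ := by
    refine ((hFcont.norm.pow 2).mul hwc).integrable_of_hasCompactSupport ?_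
    exact hFc.mono (fun x hx => by
      simp only [Function.mem_support] at hx ⊢
      intro h0; apply hx; simp [hψdef, h0])
  have hpint : Integrable p := by
    refine ((hFcont.inner hUcont).mul hwc).integrable_of_hasCompactSupport ?_
    exact hUc.mono (fun x hx => by
      simp only [Function.mem_support] at hx ⊢
      intro h0; apply hx; simp [hpdef, h0])
  have hqint : Integrable q := by
    refine ((((ν • M₀ + M₁).continuous.comp hUcont).inner hUcont).mul
      hwc).integrable_of_hasCompactSupport ?_
    exact hUc.mono (fun x hx => by
      simp only [Function.mem_support] at hx ⊢
      intro h0; apply hx; simp [hqdef, h0])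
  -- pointwise identity p = q + (1/2) g'
  have hpt : ∀ t, p t = q t + (1 / 2) * g' t := by
    intro t
    simp only [hpdef, hqdef, hg'def, hFdef, ContinuousLinearMap.add_apply,
      ContinuousLinearMap.coe_smul', Pi.smul_apply, inner_add_left,
      real_inner_smul_left, hA, smul_eq_mul]
    ring
  have hpq : ∫ t, p t = ∫ t, q t := by
    rw [show p = fun t => q t + (1 / 2) * g' t from funext hpt,
      integral_add hqint (hg'int.const_mul _), integral_const_mul, h0]
    ring
  -- step A : γ ∫ φ ≤ ∫ p
  have hA1 : γ * ∫ t, φ t ≤ ∫ t, p t := by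
    rw [hpq, ← integral_const_mul]
    refine integral_mono (hφint.const_mul γ) hqint (fun t => ?_)
    simp only [hφdef, hqdef]
    have := hcoer (U t)
    have hw := (hwpos t).le
    calc γ * (‖U t‖ ^ 2 * w t) = γ * ‖U t‖ ^ 2 * w t := by ring
      _ ≤ ⟪(ν • M₀ + M₁) (U t), U t⟫ * w t := by
          exact mul_le_mul_of_nonneg_right this hw
  -- step B : ∫ p ≤ (γ/2) ∫ φ + (2γ)⁻¹ ∫ ψ
  have hB : ∫ t, p t ≤ (γ / 2) * (∫ t, φ t) + (2 * γ)⁻¹ * ∫ t, ψ t := by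
    have hmono : ∫ t, p t ≤ ∫ t, (γ / 2 * φ t + (2 * γ)⁻¹ * ψ t) := by
      refine integral_mono hpint ((hφint.const_mul _).add (hψint.const_mul _)) (fun t => ?_)
      simp only [hpdef, hφdef, hψdef, Pi.add_apply]
      have h1 : ⟪F t, U t⟫ ≤ ‖F t‖ * ‖U t‖ := real_inner_le_norm _ _
      have hw := (hwpos t).le
      have h2 : ‖F t‖ * ‖U t‖ ≤ γ / 2 * ‖U t‖ ^ 2 + (2 * γ)⁻¹ * ‖F t‖ ^ 2 := by
        have hc2 : (2 * γ) * ((2 * γ)⁻¹ * ‖F t‖ ^ 2) = ‖F t‖ ^ 2 := by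
          rw [← mul_assoc, mul_inv_cancel₀ (by positivity : (2:ℝ) * γ ≠ 0), one_mul]
        rw [← mul_le_mul_iff_right₀ (show (0:ℝ) < 2 * γ by positivity), mul_add, hc2]
        nlinarith [sq_nonneg (γ * ‖U t‖ - ‖F t‖)]
      calc ⟪F t, U t⟫ * w t ≤ (‖F t‖ * ‖U t‖) * w t := mul_le_mul_of_nonneg_right h1 hw
        _ ≤ (γ / 2 * ‖U t‖ ^ 2 + (2 * γ)⁻¹ * ‖F t‖ ^ 2) * w t :=
            mul_le_mul_of_nonneg_right h2 hw
        _ = γ / 2 * (‖U t‖ ^ 2 * w t) + (2 * γ)⁻¹ * (‖F t‖ ^ 2 * w t) := by ring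
    calc ∫ t, p t ≤ ∫ t, (γ / 2 * φ t + (2 * γ)⁻¹ * ψ t) := hmono
      _ = (∫ t, γ / 2 * φ t) + ∫ t, (2 * γ)⁻¹ * ψ t :=
          integral_add (hφint.const_mul _) (hψint.const_mul _)
      _ = (γ / 2) * (∫ t, φ t) + (2 * γ)⁻¹ * ∫ t, ψ t := by
          rw [integral_const_mul, integral_const_mul]
  -- combine
  have hfinal : γ * ∫ t, φ t ≤ (γ / 2) * (∫ t, φ t) + (2 * γ)⁻¹ * ∫ t, ψ t :=
    hA1.trans hB
  have hγne : γ ≠ 0 := ne_of_gt hγ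
  show ∫ t, φ t ≤ γ⁻¹ ^ 2 * ∫ t, ψ t
  have h1 : (γ / 2) * (∫ t, φ t) ≤ (2 * γ)⁻¹ * ∫ t, ψ t := by linarith
  calc (∫ t, φ t) = (2 / γ) * ((γ / 2) * ∫ t, φ t) := by
        field_simp
    _ ≤ (2 / γ) * ((2 * γ)⁻¹ * ∫ t, ψ t) :=
        mul_le_mul_of_nonneg_left h1 (by positivity)
    _ = γ⁻¹ ^ 2 * ∫ t, ψ t := by
        field_simp
end

section
/- Let H be a real Hilbert space, let ν > 0, and let f : ℝ → H be continuously differentiable with ∫_ℝ (‖f(t)‖² + ‖f'(t)‖²) e^{−2νt} dt < ∞. Then for every t ∈ ℝ: e^{−2νt} ‖f(t)‖² ≤ ∫_ℝ ( ‖f'(s)‖² + (1 + 2ν) ‖f(s)‖² ) e^{−2νs} ds. -/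
open MeasureTheory RealInnerProductSpace

/-- Quantitative form of the Sobolev embedding `H¹_ν(ℝ;H) ↪ C_ν(ℝ;H)` of the
exponentially weighted Bochner spaces. -/
theorem stmt_11 {H : Type*} [NormedAddCommGroup H] [InnerProductSpace ℝ H] [CompleteSpace H]
    (ν : ℝ) (hν : 0 < ν) (f : ℝ → H) (hf : ContDiff ℝ 1 f)
    (hint : Integrable (fun t : ℝ => (‖f t‖ ^ 2 + ‖deriv f t‖ ^ 2) * Real.exp (-2 * ν * t))) :
    ∀ t : ℝ, Real.exp (-2 * ν * t) * ‖f t‖ ^ 2 ≤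
      ∫ s : ℝ, (‖deriv f s‖ ^ 2 + (1 + 2 * ν) * ‖f s‖ ^ 2) * Real.exp (-2 * ν * s) := by
  intro t
  have hfd : Differentiable ℝ f := hf.differentiable one_ne_zero
  have hf'c : Continuous (deriv f) := hf.continuous_deriv le_rfl
  have hfc : Continuous f := hfd.continuous
  set F : ℝ → ℝ := fun s => (‖deriv f s‖ ^ 2 + (1 + 2 * ν) * ‖f s‖ ^ 2) * Real.exp (-2 * ν * s)
    with hFdef
  have hFc : Continuous F := by fun_prop
  have hFnn : ∀ s, 0 ≤ F s := by
    intro s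
    apply mul_nonneg _ (Real.exp_pos _).le
    positivity
  -- integrability of ‖f‖² e
  have hint1 : Integrable (fun s : ℝ => ‖f s‖ ^ 2 * Real.exp (-2 * ν * s)) := by
    refine hint.mono (((hfc.norm.pow 2).mul (Real.continuous_exp.comp (by fun_prop))).aestronglyMeasurable) ?_
    filter_upwards with s
    rw [Real.norm_eq_abs, Real.norm_eq_abs, abs_of_nonneg (by positivity),
      abs_of_nonneg (by positivity)]
    have := Real.exp_pos (-2 * ν * s)
    nlinarith [sq_nonneg ‖deriv f s‖]
  have hFint : Integrable F := by
    have h2 := hint.add (hint1.const_mul (2 * ν))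
    refine h2.congr ?_
    filter_upwards with s
    simp only [hFdef, Pi.add_apply]
    ring
  set g : ℝ → ℝ := fun s => Real.exp (-2 * ν * s) * ‖f s‖ ^ 2 with hgdef
  have hgc : Continuous g := by fun_prop
  have hgnn : ∀ s, 0 ≤ g s := fun s => by positivity
  have hgint : Integrable g := by
    refine hint1.congr ?_
    filter_upwards with s
    exact mul_comm _ _
  -- derivative of g
  set G : ℝ → ℝ := fun s =>
    (-2 * ν * Real.exp (-2 * ν * s)) * ‖f s‖ ^ 2 +
      Real.exp (-2 * ν * s) * (⟪f s, deriv f s⟫ + ⟪f s, deriv f s⟫) with hGdef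
  have hGc : Continuous G := by
    apply Continuous.add
    · fun_prop
    · exact (Real.continuous_exp.comp (by fun_prop)).mul
        ((hfc.inner hf'c).add (hfc.inner hf'c))
  have hderiv : ∀ s : ℝ, HasDerivAt g (G s) s := by
    intro s
    have h1 : HasDerivAt (fun x : ℝ => Real.exp (-2 * ν * x)) (-2 * ν * Real.exp (-2 * ν * s)) s := by
      have := ((hasDerivAt_id s).const_mul (-2 * ν)).exp
      simpa [mul_comm] using this
    have h2 : HasDerivAt (fun x => ⟪f x, f x⟫)
        (⟪f s, deriv f s⟫ + ⟪deriv f s, f s⟫) s :=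
      HasDerivAt.inner ℝ (hfd s).hasDerivAt (hfd s).hasDerivAt
    have h3 : HasDerivAt (fun x => Real.exp (-2 * ν * x) * ⟪f x, f x⟫) _ s := h1.mul h2
    have heq : g = fun x => Real.exp (-2 * ν * x) * ⟪f x, f x⟫ := by
      funext x
      rw [hgdef]
      simp [real_inner_self_eq_norm_sq]
    rw [heq]
    convert h3 using 1
    simp only [hGdef, real_inner_self_eq_norm_sq, real_inner_comm (deriv f s) (f s)]
    try ring
  -- bound |G| ≤ F
  have hGF : ∀ s, |G s| ≤ F s := by
    intro s
    have he := Real.exp_pos (-2 * ν * s)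
    have hinner : |⟪f s, deriv f s⟫| ≤ ‖f s‖ * ‖deriv f s‖ := abs_real_inner_le_norm _ _
    rw [hGdef, hFdef]
    simp only
    have : (-2 * ν * Real.exp (-2 * ν * s)) * ‖f s‖ ^ 2 +
        Real.exp (-2 * ν * s) * (⟪f s, deriv f s⟫ + ⟪f s, deriv f s⟫)
        = (-2 * ν * ‖f s‖ ^ 2 + 2 * ⟪f s, deriv f s⟫) * Real.exp (-2 * ν * s) := by ring
    rw [this, abs_mul, abs_of_pos he]
    have hb : |(-2 * ν * ‖f s‖ ^ 2 + 2 * ⟪f s, deriv f s⟫)| ≤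
        ‖deriv f s‖ ^ 2 + (1 + 2 * ν) * ‖f s‖ ^ 2 := by
      rw [abs_le]
      constructor
      · nlinarith [abs_nonneg (⟪f s, deriv f s⟫), neg_abs_le (⟪f s, deriv f s⟫),
          sq_nonneg (‖f s‖ - ‖deriv f s‖), sq_nonneg ‖f s‖]
      · nlinarith [le_abs_self (⟪f s, deriv f s⟫), sq_nonneg (‖f s‖ - ‖deriv f s‖),
          sq_nonneg ‖f s‖]
    exact mul_le_mul_of_nonneg_right hb he.le
  -- main estimate for b ≥ t
  have hmain : ∀ b, t ≤ b → g t ≤ g b + ∫ s, F s := by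
    intro b hb
    have hftc : ∫ s in t..b, G s = g b - g t :=
      intervalIntegral.integral_eq_sub_of_hasDerivAt (fun s _ => hderiv s)
        (hGc.intervalIntegrable t b)
    have h1 : ∫ s in t..b, (-F s) ≤ ∫ s in t..b, G s := by
      apply intervalIntegral.integral_mono_on hb
        ((hFc.neg).intervalIntegrable t b) (hGc.intervalIntegrable t b)
      intro x _
      have := hGF x
      rw [abs_le] at this
      show -F x ≤ G x
      linarith [this.1]
    have h2 : ∫ s in t..b, F s ≤ ∫ s, F s := by
      rw [intervalIntegral.integral_of_le hb]
      exact setIntegral_le_integral hFint (Filter.Eventually.of_forall hFnn)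
    rw [intervalIntegral.integral_neg] at h1
    linarith [hftc ▸ h1]
  -- g is small somewhere far out
  have hsmall : ∀ ε : ℝ, 0 < ε → ∃ b, t ≤ b ∧ g b < ε := by
    intro ε hε
    by_contra hc
    push_neg at hc
    have hind : Integrable ((Set.Ici t).indicator (fun _ : ℝ => ε)) := by
      refine hgint.mono ?_ ?_
      · exact (stronglyMeasurable_const.indicator measurableSet_Ici).aestronglyMeasurable
      · filter_upwards with s
        rw [Real.norm_eq_abs, Real.norm_eq_abs, abs_of_nonneg (hgnn s)]
        by_cases hs : s ∈ Set.Ici t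
        · rw [Set.indicator_of_mem hs, abs_of_pos hε]
          exact hc s hs
        · rw [Set.indicator_of_notMem hs]
          simpa using hgnn s
    rw [integrable_indicator_iff measurableSet_Ici] at hind
    rw [integrableOn_const_iff] at hind
    rcases hind with h | h
    · exact hε.ne' (enorm_eq_zero.mp h)
    · rw [Real.volume_Ici] at h
      exact (lt_irrefl _ h).elim
  -- conclude
  have hfin : g t ≤ ∫ s, F s := by
    refine le_of_forall_pos_le_add ?_
    intro ε hε
    obtain ⟨b, hb, hgb⟩ := hsmall ε hε
    have := hmain b hb
    linarith
  exact hfin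
end
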